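/- Let V be an oriented identification function for Γ: P → R ⊆ ℝ that is locally Lipschitz with parameter M, i.e., |E_{Y∼P}[V(Y,γ)]| ≤ M·|γ − Γ(P)| for all P ∈ P and γ ∈ R. Then the induced loss ℓ(y,γ) = ∫_{γ₀}^γ V(y,r) dr + κ(y) satisfies |E_{Y∼P}[ℓ(Y,γ)] − E_{Y∼P}[ℓ(Y,Γ(P))]| ≤ (M/2)·(γ − Γ(P))² for all P ∈ P and γ ∈ R. -/

import Mathlib

open MeasureTheory ProbabilityTheory Function

section Aux

variable {Y : Type*} [MeasurableSpace Y] (P : Measure Y) [IsProbabilityMeasure P]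
  (V : Y → ℝ → ℝ) (C : ℝ) (hbdd : ∀ y r, |V y r| ≤ C)
  (hmeas : Measurable (Function.uncurry V))

include hbdd hmeas in
lemma aux_prod_integrable (S : Set ℝ) (hS : volume S < ⊤) :
    Integrable (uncurry V) (P.prod (volume.restrict S)) := by
  have hfin : IsFiniteMeasure (volume.restrict S) := by
    constructor
    simpa [Measure.restrict_apply_univ] using hS
  refine (integrable_const C).mono' hmeas.aestronglyMeasurable ?_
  filter_upwards with p
  simpa [Real.norm_eq_abs, Function.uncurry_def] using hbdd p.1 p.2

include hbdd hmeas in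
lemma aux_swap (a b : ℝ) :
    ∫ y, (∫ r in a..b, V y r) ∂P = ∫ r in a..b, (∫ y, V y r ∂P) := by
  have h1 := MeasureTheory.integral_integral_swap
    (aux_prod_integrable P V C hbdd hmeas (Set.Ioc a b) (by simp [Real.volume_Ioc]))
  have h2 := MeasureTheory.integral_integral_swap
    (aux_prod_integrable P V C hbdd hmeas (Set.Ioc b a) (by simp [Real.volume_Ioc]))
  have hi1 : Integrable (fun y => ∫ r in Set.Ioc a b, V y r) P :=
    (aux_prod_integrable P V C hbdd hmeas (Set.Ioc a b)
      (by simp [Real.volume_Ioc])).integral_prod_left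
  have hi2 : Integrable (fun y => ∫ r in Set.Ioc b a, V y r) P :=
    (aux_prod_integrable P V C hbdd hmeas (Set.Ioc b a)
      (by simp [Real.volume_Ioc])).integral_prod_left
  simp only [intervalIntegral]
  rw [integral_sub hi1 hi2, h1, h2]

include hbdd hmeas in
lemma aux_intervalIntegrable (y : Y) (a b : ℝ) :
    IntervalIntegrable (V y) volume a b := by
  refine ⟨?_, ?_⟩ <;>
  · refine (integrable_const C).mono' (hmeas.comp (measurable_prodMk_left (x := y))).aestronglyMeasurable ?_
    filter_upwards with r
    simpa [Real.norm_eq_abs] using hbdd y r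

include hbdd hmeas in
lemma aux_integrable (a b : ℝ) :
    Integrable (fun y => ∫ r in a..b, V y r) P := by
  have hsm : StronglyMeasurable (fun y => ∫ r in a..b, V y r) := by
    simp only [intervalIntegral]
    exact (hmeas.stronglyMeasurable.integral_prod_right').sub
      (hmeas.stronglyMeasurable.integral_prod_right')
  refine (integrable_const (C * |b - a|)).mono' hsm.aestronglyMeasurable ?_
  filter_upwards with y
  exact intervalIntegral.norm_integral_le_of_norm_le_const
    (fun r _ => by simpa [Real.norm_eq_abs] using hbdd y r)

end Aux

lemma aux_abs_integral (a b : ℝ) : |∫ r in a..b, abs (r - a)| = (b - a) ^ 2 / 2 := by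
  rw [intervalIntegral.integral_comp_sub_right (fun x => |x|) a, sub_self]
  rcases le_or_gt 0 (b - a) with h | h
  · rw [intervalIntegral.integral_congr (g := fun x => x)
      (fun x hx => abs_of_nonneg (by
        rcases Set.mem_uIcc.mp hx with ⟨h1, _⟩ | ⟨h1, h2⟩
        · exact h1
        · linarith))]
    rw [integral_id]
    rw [abs_of_nonneg (by nlinarith [sq_nonneg (b - a)])]
    ring
  · rw [intervalIntegral.integral_congr (g := fun x => -x)
      (fun x hx => abs_of_nonpos (by
        rcases Set.mem_uIcc.mp hx with ⟨_, h2⟩ | ⟨h1, h2⟩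
        · linarith
        · exact h2))]
    rw [intervalIntegral.integral_neg, integral_id]
    rw [abs_of_nonpos (by nlinarith)]
    ring

/-- If the oriented identification function V is locally Lipschitz with
parameter M, the induced loss is locally Hölder-smooth with parameters (M/2, 2). -/
theorem induced_loss_hoelder_smooth
    {Y : Type*} [MeasurableSpace Y]
    (Pcal : Set (Measure Y)) (hprob : ∀ P ∈ Pcal, IsProbabilityMeasure P)
    (R : Set ℝ) (hR : R.OrdConnected)
    (Γ : Measure Y → ℝ) (hΓR : ∀ P ∈ Pcal, Γ P ∈ R)
    (V : Y → ℝ → ℝ) (C : ℝ) (hbdd : ∀ y r, |V y r| ≤ C)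
    (hmeas : Measurable (Function.uncurry V))
    (horiented : ∀ P ∈ Pcal, ∀ γ ∈ R, (0 < ∫ y, V y γ ∂P ↔ Γ P < γ))
    (M : ℝ)
    (hlip : ∀ P ∈ Pcal, ∀ γ ∈ R, |∫ y, V y γ ∂P| ≤ M * |γ - Γ P|)
    (γ₀ : ℝ) (hγ₀ : ∃ P ∈ Pcal, Γ P = γ₀)
    (κ : Y → ℝ) (hκ : ∀ P ∈ Pcal, Integrable κ P) :
    ∀ P ∈ Pcal, ∀ γ ∈ R,
      |(∫ y, ((∫ r in γ₀..γ, V y r) + κ y) ∂P) -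
        ∫ y, ((∫ r in γ₀..(Γ P), V y r) + κ y) ∂P| ≤ M / 2 * (γ - Γ P) ^ 2 := by
  intro P hP γ hγ
  haveI := hprob P hP
  set a := Γ P with ha
  -- rewrite the difference as ∫ y, ∫ r in a..γ, V y r
  have hIκ := hκ P hP
  have hI1 := aux_integrable P V C hbdd hmeas γ₀ γ
  have hI2 := aux_integrable P V C hbdd hmeas γ₀ a
  have hI3 := aux_integrable P V C hbdd hmeas a γ
  have key : (∫ y, ((∫ r in γ₀..γ, V y r) + κ y) ∂P) -
      ∫ y, ((∫ r in γ₀..a, V y r) + κ y) ∂P = ∫ r in a..γ, (∫ y, V y r ∂P) := by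
    rw [integral_add hI1 hIκ, integral_add hI2 hIκ]
    have : (∫ y, (∫ r in γ₀..γ, V y r) ∂P) - ∫ y, (∫ r in γ₀..a, V y r) ∂P
        = ∫ y, (∫ r in a..γ, V y r) ∂P := by
      rw [← integral_sub hI1 hI2]
      refine integral_congr_ae (Filter.Eventually.of_forall fun y => ?_)
      exact intervalIntegral.integral_interval_sub_left
        (aux_intervalIntegrable V C hbdd hmeas y γ₀ γ)
        (aux_intervalIntegrable V C hbdd hmeas y γ₀ a)
    rw [add_sub_add_comm, sub_self, add_zero, this,
      aux_swap P V C hbdd hmeas a γ]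
  rw [key]
  rcases eq_or_ne γ a with h | h
  · simp [h]
  -- M is nonnegative
  have hM : 0 ≤ M := by
    have h1 := hlip P hP γ hγ
    have h2 : 0 < |γ - a| := abs_pos.mpr (sub_ne_zero.mpr h)
    nlinarith [abs_nonneg (∫ y, V y γ ∂P)]
  -- bound the interval integral
  have hbound : ‖∫ r in a..γ, (∫ y, V y r ∂P)‖ ≤ |∫ r in a..γ, M * abs (r - a)| := by
    refine intervalIntegral.norm_integral_le_abs_of_norm_le ?_ ?_
    · refine (ae_restrict_iff' measurableSet_uIoc).mpr
        (Filter.Eventually.of_forall fun r hr => ?_)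
      have hrR : r ∈ R := hR.uIcc_subset (hΓR P hP) hγ
        (Set.uIoc_subset_uIcc (by simpa [Set.uIoc_comm] using hr))
      simpa [Real.norm_eq_abs] using hlip P hP r hrR
    · exact (continuous_const.mul ((continuous_id.sub continuous_const).abs)).intervalIntegrable
        a γ
  calc |∫ r in a..γ, (∫ y, V y r ∂P)| ≤ |∫ r in a..γ, M * abs (r - a)| := hbound
    _ = M * |∫ r in a..γ, abs (r - a)| := by
        rw [intervalIntegral.integral_const_mul, abs_mul, abs_of_nonneg hM]
    _ = M * ((γ - a) ^ 2 / 2) := by rw [aux_abs_integral]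
    _ = M / 2 * (γ - a) ^ 2 := by ring
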